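/- Let (A, C, B) be a recollement of abelian categories, C₁ = {C ∈ C : i^* j_* j^*(C) = 0}, and B₁ = {B ∈ B : B ≅ j^*(C) for some C ∈ C₁}, with the induced exact structures. Then the restrictions i^! : C₁ → A and j_* : B₁ → C are exact functors (they preserve admissible short exact sequences). -/

import Mathlib

open CategoryTheory CategoryTheory.Limits

universe v₁ v₂ v₃ u₁ u₂ u₃

/-- A recollement of abelian categories `(𝒜, 𝒞, ℬ)`, consisting of additive functors
`i_* : 𝒜 ⥤ 𝒞`, `i^*, i^! : 𝒞 ⥤ 𝒜`, `j^* : 𝒞 ⥤ ℬ`, `j_!, j_* : ℬ ⥤ 𝒞` with adjoint pairs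
`(i^*, i_*)`, `(i_*, i^!)`, `(j_!, j^*)`, `(j^*, j_*)`, with `i_*`, `j_!`, `j_*` fully faithful
and the essential image of `i_*` equal to the kernel of `j^*`. -/
structure Recollement (𝒜 : Type u₁) (𝒞 : Type u₂) (ℬ : Type u₃)
    [Category.{v₁} 𝒜] [Category.{v₂} 𝒞] [Category.{v₃} ℬ]
    [Abelian 𝒜] [Abelian 𝒞] [Abelian ℬ] where
  /-- the functor `i^* : 𝒞 ⥤ 𝒜` -/
  iStar : 𝒞 ⥤ 𝒜
  /-- the functor `i_* : 𝒜 ⥤ 𝒞` -/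
  iIns : 𝒜 ⥤ 𝒞
  /-- the functor `i^! : 𝒞 ⥤ 𝒜` -/
  iShriek : 𝒞 ⥤ 𝒜
  /-- the functor `j_! : ℬ ⥤ 𝒞` -/
  jShriek : ℬ ⥤ 𝒞
  /-- the functor `j^* : 𝒞 ⥤ ℬ` -/
  jStar : 𝒞 ⥤ ℬ
  /-- the functor `j_* : ℬ ⥤ 𝒞` -/
  jIns : ℬ ⥤ 𝒞
  iStar_additive : iStar.Additive
  iIns_additive : iIns.Additive
  iShriek_additive : iShriek.Additive
  jShriek_additive : jShriek.Additive
  jStar_additive : jStar.Additive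
  jIns_additive : jIns.Additive
  /-- the adjunction `i^* ⊣ i_*` -/
  adj₁ : iStar ⊣ iIns
  /-- the adjunction `i_* ⊣ i^!` -/
  adj₂ : iIns ⊣ iShriek
  /-- the adjunction `j_! ⊣ j^*` -/
  adj₃ : jShriek ⊣ jStar
  /-- the adjunction `j^* ⊣ j_*` -/
  adj₄ : jStar ⊣ jIns
  iIns_full : iIns.Full
  iIns_faithful : iIns.Faithful
  jShriek_full : jShriek.Full
  jShriek_faithful : jShriek.Faithful
  jIns_full : jIns.Full
  jIns_faithful : jIns.Faithful
  /-- `im i_* = ker j^*` -/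
  im_eq_ker : ∀ X : 𝒞, IsZero (jStar.obj X) ↔ ∃ A₀ : 𝒜, Nonempty (iIns.obj A₀ ≅ X)

variable {𝒜 : Type u₁} {𝒞 : Type u₂} {ℬ : Type u₃}
  [Category.{v₁} 𝒜] [Category.{v₂} 𝒞] [Category.{v₃} ℬ]
  [Abelian 𝒜] [Abelian 𝒞] [Abelian ℬ]

/-- `0 ⟶ X ⟶ Y ⟶ Z ⟶ 0` is a short exact sequence. -/
def IsSES {𝒟 : Type*} [Category 𝒟] [Abelian 𝒟] {X Y Z : 𝒟}
    (f : X ⟶ Y) (g : Y ⟶ Z) : Prop :=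
  ∃ w : f ≫ g = 0, (ShortComplex.mk f g w).ShortExact

/-- `X` belongs to `𝒞₁ = {C ∈ 𝒞 : i^* j_* j^*(C) = 0}`. -/
def InC₁ (R : Recollement 𝒜 𝒞 ℬ) (X : 𝒞) : Prop :=
  IsZero (R.iStar.obj (R.jIns.obj (R.jStar.obj X)))

/-- `Y` belongs to `ℬ₁ = {B ∈ ℬ : B ≅ j^*(C) for some C ∈ 𝒞₁}`. -/
def InB₁ (R : Recollement 𝒜 𝒞 ℬ) (Y : ℬ) : Prop :=
  ∃ X : 𝒞, InC₁ R X ∧ Nonempty (Y ≅ R.jStar.obj X)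

section Helpers

open CategoryTheory.Abelian CategoryTheory.Abelian.Pseudoelement
open Pseudoelement

/-- A left exact functor sends a short exact sequence whose image of `g` is epi
to a short exact sequence. -/
lemma mapSES {C : Type*} {D : Type*} [Category C] [Category D] [Abelian C] [Abelian D]
    (F : C ⥤ D) [F.Additive] [PreservesFiniteLimits F]
    {X Y Z : C} {f : X ⟶ Y} {g : Y ⟶ Z} (h : IsSES f g) (he : Epi (F.map g)) :
    IsSES (F.map f) (F.map g) := by
  obtain ⟨w, hse⟩ := h
  haveI := hse.mono_f
  haveI := preserves_mono_of_preservesLimit F f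
  refine ⟨by rw [← F.map_comp, w, F.map_zero], ?_⟩
  haveI : Epi (F.map g) := he
  exact { exact := hse.exact.map_of_mono_of_preservesKernel F hse.mono_f inferInstance }

lemma Rec.isZero_jStar_iIns (R : Recollement 𝒜 𝒞 ℬ) (A : 𝒜) :
    IsZero (R.jStar.obj (R.iIns.obj A)) :=
  (R.im_eq_ker _).mpr ⟨A, ⟨Iso.refl _⟩⟩

lemma Rec.hom_iIns_jIns (R : Recollement 𝒜 𝒞 ℬ) {A : 𝒜} {B : ℬ}
    (φ : R.iIns.obj A ⟶ R.jIns.obj B) : φ = 0 := by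
  haveI := R.jIns_additive
  have h : φ = (R.adj₄.homEquiv _ _) ((R.adj₄.homEquiv _ _).symm φ) :=
    ((R.adj₄.homEquiv _ _).apply_symm_apply φ).symm
  rw [h, (Rec.isZero_jStar_iIns R A).eq_zero_of_src ((R.adj₄.homEquiv _ _).symm φ),
    Adjunction.homEquiv_unit, Functor.map_zero, comp_zero]

lemma Rec.isZero_of_isZero_jStar_iStar (R : Recollement 𝒜 𝒞 ℬ) {X : 𝒞}
    (h1 : IsZero (R.jStar.obj X)) (h2 : IsZero (R.iStar.obj X)) : IsZero X := by
  haveI := R.iIns_full; haveI := R.iIns_faithful; haveI := R.iIns_additive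
  obtain ⟨A, ⟨e⟩⟩ := (R.im_eq_ker X).mp h1
  haveI : IsIso R.adj₁.counit := R.adj₁.counit_isIso_of_R_fully_faithful
  have hA : IsZero A :=
    (h2.of_iso (R.iStar.mapIso e)).of_iso (asIso (R.adj₁.counit.app A)).symm
  exact (R.iIns.map_isZero hA).of_iso e.symm

lemma Rec.epi_of (R : Recollement 𝒜 𝒞 ℬ) {P Q : 𝒞} (f : P ⟶ Q)
    (h1 : Epi (R.jStar.map f)) (h2 : IsZero (R.iStar.obj Q)) : Epi f := by
  haveI : PreservesColimitsOfSize R.jStar := R.adj₄.leftAdjoint_preservesColimits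
  haveI : PreservesColimitsOfSize R.iStar := R.adj₁.leftAdjoint_preservesColimits
  apply CategoryTheory.Abelian.epi_of_cokernel_π_eq_zero
  have hz : IsZero (cokernel f) := by
    apply Rec.isZero_of_isZero_jStar_iStar R
    · have hc : IsZero (cokernel (R.jStar.map f)) :=
        IsZero.of_epi_eq_zero (cokernel.π (R.jStar.map f)) (cokernel.π_of_epi _)
      exact hc.of_iso (asIso (cokernelComparison f R.jStar)).symm
    · have hc : IsZero (cokernel (R.iStar.map f)) :=
        IsZero.of_epi_eq_zero (cokernel.π (R.iStar.map f)) (h2.eq_zero_of_src _)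
      exact hc.of_iso (asIso (cokernelComparison f R.iStar)).symm
  exact hz.eq_zero_of_tgt _

lemma Rec.isIso_jStar_unit (R : Recollement 𝒜 𝒞 ℬ) (X : 𝒞) :
    IsIso (R.jStar.map (R.adj₄.unit.app X)) := by
  haveI := R.jIns_full; haveI := R.jIns_faithful
  haveI : IsIso R.adj₄.counit := R.adj₄.counit_isIso_of_R_fully_faithful
  haveI : IsIso (𝟙 (R.jStar.obj X)) := inferInstance
  exact IsIso.of_isIso_fac_right (R.adj₄.left_triangle_components X)

lemma Rec.epi_unit (R : Recollement 𝒜 𝒞 ℬ) {X : 𝒞} (h : InC₁ R X) :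
    Epi (R.adj₄.unit.app X) := by
  haveI := Rec.isIso_jStar_unit R X
  have he : Epi (R.jStar.map (R.adj₄.unit.app X)) := inferInstance
  exact Rec.epi_of R (R.adj₄.unit.app X) he h

lemma Rec.delta_exact (R : Recollement 𝒜 𝒞 ℬ) (Z : 𝒞) :
    Mono (R.adj₂.counit.app Z) ∧
      (ShortComplex.mk (R.adj₂.counit.app Z) (R.adj₄.unit.app Z)
        (Rec.hom_iIns_jIns R _)).Exact := by
  haveI := R.iIns_full; haveI := R.iIns_faithful; haveI := R.iIns_additive
  haveI := R.jStar_additive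
  haveI : PreservesLimitsOfSize R.jStar := R.adj₃.rightAdjoint_preservesLimits
  set δZ := R.adj₂.counit.app Z with hδZ
  set ηZ := R.adj₄.unit.app Z with hηZ
  -- `δZ` is a monomorphism
  have hker : kernel.ι δZ = 0 := by
    have hzk : IsZero (R.jStar.obj (kernel δZ)) := by
      haveI := preserves_mono_of_preservesLimit R.jStar (kernel.ι δZ)
      exact IsZero.of_mono_eq_zero (R.jStar.map (kernel.ι δZ))
        ((Rec.isZero_jStar_iIns R _).eq_zero_of_tgt _)
    obtain ⟨A', ⟨e'⟩⟩ := (R.im_eq_ker _).mp hzk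
    obtain ⟨ψ, hψ⟩ := R.iIns.map_surjective (e'.hom ≫ kernel.ι δZ)
    have h1 : (R.adj₂.homEquiv _ _).symm ψ = 0 := by
      rw [Adjunction.homEquiv_counit, hψ, Category.assoc, ← hδZ, kernel.condition,
        comp_zero]
    have hψ0 : ψ = 0 := by
      apply (R.adj₂.homEquiv _ _).symm.injective
      rw [h1, Adjunction.homEquiv_counit, Functor.map_zero, zero_comp]
    calc kernel.ι δZ = e'.inv ≫ (e'.hom ≫ kernel.ι δZ) := by
          rw [← Category.assoc, e'.inv_hom_id, Category.id_comp]
    _ = 0 := by rw [← hψ, hψ0, Functor.map_zero, comp_zero]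
  haveI hmono : Mono δZ := CategoryTheory.Abelian.mono_of_kernel_ι_eq_zero _ hker
  -- identification of `kernel ηZ` with the image of `i_*`
  have w0 : δZ ≫ ηZ = 0 := Rec.hom_iIns_jIns R _
  have hzE : IsZero (R.jStar.obj (kernel ηZ)) := by
    haveI := preserves_mono_of_preservesLimit R.jStar (kernel.ι ηZ)
    haveI := Rec.isIso_jStar_unit R Z
    apply IsZero.of_mono_eq_zero (R.jStar.map (kernel.ι ηZ))
    have hc : R.jStar.map (kernel.ι ηZ) ≫ R.jStar.map ηZ = 0 := by
      rw [← R.jStar.map_comp, kernel.condition, Functor.map_zero]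
    exact (cancel_mono (R.jStar.map ηZ)).mp (by rw [hc, zero_comp])
  obtain ⟨A0, ⟨e0⟩⟩ := (R.im_eq_ker _).mp hzE
  set ι := kernel.ι ηZ with hι
  set φ : A0 ⟶ R.iShriek.obj Z := (R.adj₂.homEquiv _ _) (e0.hom ≫ ι) with hφdef
  have hφ : R.iIns.map φ ≫ δZ = e0.hom ≫ ι := by
    have h := (R.adj₂.homEquiv A0 Z).symm_apply_apply (e0.hom ≫ ι)
    rwa [Adjunction.homEquiv_counit] at h
  set lift : R.iIns.obj (R.iShriek.obj Z) ⟶ kernel ηZ := kernel.lift ηZ δZ w0 with hliftdef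
  have hlift : lift ≫ ι = δZ := kernel.lift_ι _ _ _
  set inv : kernel ηZ ⟶ R.iIns.obj (R.iShriek.obj Z) := e0.inv ≫ R.iIns.map φ with hinvdef
  have h2 : inv ≫ δZ = ι := by
    rw [hinvdef, Category.assoc, hφ, ← Category.assoc, e0.inv_hom_id, Category.id_comp]
  have h3 : inv ≫ lift = 𝟙 _ := by
    rw [← cancel_mono ι, Category.assoc, hlift, h2, Category.id_comp]
  have h4 : lift ≫ inv = 𝟙 _ := by
    rw [← cancel_mono δZ, Category.assoc, h2, hlift, Category.id_comp]
  haveI : IsIso lift := ⟨inv, h4, h3⟩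
  refine ⟨hmono, ShortComplex.exact_of_f_is_kernel _ ?_⟩
  refine IsLimit.ofIsoLimit (kernelIsKernel ηZ) (Fork.ext (asIso lift).symm ?_)
  show (asIso lift).symm.hom ≫ δZ = ι
  rw [← hlift, ← Category.assoc]
  simp

lemma Rec.jIns_ses (R : Recollement 𝒜 𝒞 ℬ) {X Y Z : ℬ} (f : X ⟶ Y) (g : Y ⟶ Z)
    (hZ : InB₁ R Z) (h : IsSES f g) :
    IsSES (R.jIns.map f) (R.jIns.map g) := by
  haveI := R.jIns_additive; haveI := R.jIns_full; haveI := R.jIns_faithful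
  haveI : PreservesLimitsOfSize.{0, 0} R.jIns := R.adj₄.rightAdjoint_preservesLimits
  obtain ⟨w, hse⟩ := h
  haveI := hse.epi_g
  apply mapSES _ ⟨w, hse⟩
  apply Rec.epi_of R
  · haveI : IsIso R.adj₄.counit := R.adj₄.counit_isIso_of_R_fully_faithful
    have e2 : R.jStar.map (R.jIns.map g) =
        (R.adj₄.counit.app Y ≫ g) ≫ inv (R.adj₄.counit.app Z) := by
      rw [IsIso.eq_comp_inv]
      exact R.adj₄.counit.naturality g
    rw [e2]
    infer_instance
  · obtain ⟨X₀, hX₀, ⟨e⟩⟩ := hZ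
    exact hX₀.of_iso (R.iStar.mapIso (R.jIns.mapIso e))

lemma Rec.epi_iShriek (R : Recollement 𝒜 𝒞 ℬ) {X Y Z : 𝒞} (f : X ⟶ Y) (g : Y ⟶ Z)
    (hX : InC₁ R X) (hY : InC₁ R Y) (hZ : InC₁ R Z) (h : IsSES f g) :
    Epi (R.iShriek.map g) := by
  haveI := R.iIns_faithful
  haveI := R.jStar_additive
  haveI : PreservesLimitsOfSize.{0, 0} R.jStar := R.adj₃.rightAdjoint_preservesLimits
  haveI : PreservesColimitsOfSize.{0, 0} R.jStar := R.adj₄.leftAdjoint_preservesColimits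
  obtain ⟨w, hse⟩ := h
  haveI := hse.epi_g
  -- the middle row `j^*` of the short exact sequence, which lies in `ℬ₁`
  have hmid : IsSES (R.jStar.map f) (R.jStar.map g) :=
    ⟨by rw [← R.jStar.map_comp, w, R.jStar.map_zero], hse.map_of_exact R.jStar⟩
  -- the bottom row `j_* j^*` of the diagram
  have hbot : IsSES (R.jIns.map (R.jStar.map f)) (R.jIns.map (R.jStar.map g)) :=
    Rec.jIns_ses R _ _ ⟨Z, hZ, ⟨Iso.refl _⟩⟩ hmid
  obtain ⟨wb, hb⟩ := hbot
  haveI := Rec.epi_unit R hX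
  haveI := (Rec.delta_exact R Z).1
  apply R.iIns.epi_of_epi_map
  apply epi_of_pseudo_surjective
  intro t
  obtain ⟨y, hy⟩ := pseudo_surjective_of_epi g (R.adj₂.counit.app Z t)
  have hηz : (R.adj₄.unit.app Z) ((R.adj₂.counit.app Z) t) = 0 := by
    rw [← Pseudoelement.comp_apply, Rec.hom_iIns_jIns R (R.adj₂.counit.app Z ≫ R.adj₄.unit.app Z)]
    exact Pseudoelement.zero_apply _ _
  have h1 : (R.jIns.map (R.jStar.map g)) ((R.adj₄.unit.app Y) y) = 0 := by
    rw [← Pseudoelement.comp_apply]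
    have hn : R.adj₄.unit.app Y ≫ R.jIns.map (R.jStar.map g) = g ≫ R.adj₄.unit.app Z :=
      (R.adj₄.unit.naturality g).symm
    rw [hn, Pseudoelement.comp_apply, hy]
    exact hηz
  obtain ⟨x', hx'⟩ := pseudo_exact_of_exact hb.exact _ h1
  obtain ⟨x, hx⟩ := pseudo_surjective_of_epi (R.adj₄.unit.app X) x'
  have h2 : (R.adj₄.unit.app Y) y = (R.adj₄.unit.app Y) (f x) := by
    have hn : f ≫ R.adj₄.unit.app Y = R.adj₄.unit.app X ≫ R.jIns.map (R.jStar.map f) :=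
      R.adj₄.unit.naturality f
    rw [← Pseudoelement.comp_apply, hn, Pseudoelement.comp_apply, hx, hx']
  obtain ⟨w', hw'1, hw'2⟩ := sub_of_eq_image (R.adj₄.unit.app Y) y (f x) h2
  have hgfx : (g : Y ⟶ Z) (f x) = 0 := by
    rw [← Pseudoelement.comp_apply, w]
    exact Pseudoelement.zero_apply _ _
  have hgw : (g : Y ⟶ Z) w' = (g : Y ⟶ Z) y := hw'2 _ g hgfx
  obtain ⟨s, hs⟩ := pseudo_exact_of_exact (Rec.delta_exact R Y).2 w' hw'1
  refine ⟨s, ?_⟩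
  apply pseudo_injective_of_mono (R.adj₂.counit.app Z)
  have hn : R.iIns.map (R.iShriek.map g) ≫ R.adj₂.counit.app Z =
      R.adj₂.counit.app Y ≫ g := R.adj₂.counit.naturality g
  rw [← Pseudoelement.comp_apply, hn, Pseudoelement.comp_apply, hs, hgw, hy]

end Helpers

/-- The restrictions `i^! : 𝒞₁ → 𝒜` and `j_* : ℬ₁ → 𝒞` are exact functors: they send
admissible short exact sequences (short exact sequences of the ambient abelian category
all of whose terms lie in the subcategory) to short exact sequences. -/
theorem stmt_11 (R : Recollement 𝒜 𝒞 ℬ) :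
    (∀ {X Y Z : 𝒞} (f : X ⟶ Y) (g : Y ⟶ Z), InC₁ R X → InC₁ R Y → InC₁ R Z →
        IsSES f g → IsSES (R.iShriek.map f) (R.iShriek.map g)) ∧
    (∀ {X Y Z : ℬ} (f : X ⟶ Y) (g : Y ⟶ Z), InB₁ R X → InB₁ R Y → InB₁ R Z →
        IsSES f g → IsSES (R.jIns.map f) (R.jIns.map g)) := by
  constructor
  · intro X Y Z f g hX hY hZ h
    haveI := R.iShriek_additive
    haveI : PreservesLimitsOfSize.{0, 0} R.iShriek := R.adj₂.rightAdjoint_preservesLimits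
    exact mapSES R.iShriek h (Rec.epi_iShriek R f g hX hY hZ h)
  · intro X Y Z f g _ _ hZ h
    exact Rec.jIns_ses R f g hZ h
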